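/- With the notation of the operator D_L (periodic boundary treatment), for v ∈ C¹([a,b]) periodic with periodic derivative, D_L[v](x) = (1/α) L_L^{-1}[v'](x) for all x ∈ [a,b]; equivalently D_L[v'](x) = v'(x) − α D_L[v](x). -/

import Mathlib

open MeasureTheory intervalIntegral

noncomputable def IL (α a : ℝ) (v : ℝ → ℝ) (x : ℝ) : ℝ :=
  α * ∫ y in a..x, Real.exp (-(α * (x - y))) * v y

noncomputable def Linv (α a b : ℝ) (v : ℝ → ℝ) (x : ℝ) : ℝ :=
  IL α a v x + (IL α a v b / (1 - Real.exp (-(α * (b - a))))) * Real.exp (-(α * (x - a)))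

noncomputable def DL (α a b : ℝ) (v : ℝ → ℝ) (x : ℝ) : ℝ := v x - Linv α a b v x

lemma IL_deriv_key (α a x : ℝ) (v : ℝ → ℝ) (hv : ContDiff ℝ 1 v) :
    IL α a (deriv v) x
      = α * v x - α * Real.exp (-(α * (x - a))) * v a - α * IL α a v x := by
  have hv1 : Differentiable ℝ v := hv.differentiable one_ne_zero
  have hc : Continuous (deriv v) := hv.continuous_deriv le_rfl
  have hF : ∀ y : ℝ, HasDerivAt (fun y => Real.exp (-(α * (x - y))) * v y)
      (α * (Real.exp (-(α * (x - y))) * v y) + Real.exp (-(α * (x - y))) * deriv v y) y := by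
    intro y
    have h1 : HasDerivAt (fun y : ℝ => -(α * (x - y))) α y := by
      have h0 : HasDerivAt (fun y : ℝ => x - y) (-1) y := (hasDerivAt_id y).const_sub x
      have := ((h0.const_mul α).neg)
      exact this.congr_deriv (by ring)
    have h3 := h1.exp.mul (hv1 y).hasDerivAt
    exact h3.congr_deriv (by ring)
  have hint : ∫ y in a..x,
      (α * (Real.exp (-(α * (x - y))) * v y) + Real.exp (-(α * (x - y))) * deriv v y)
      = Real.exp (-(α * (x - x))) * v x - Real.exp (-(α * (x - a))) * v a := by
    exact intervalIntegral.integral_eq_sub_of_hasDerivAt (fun y _ => hF y)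
      (by apply Continuous.intervalIntegrable; fun_prop)
  rw [intervalIntegral.integral_add (by apply Continuous.intervalIntegrable; fun_prop)
    (by apply Continuous.intervalIntegrable; fun_prop),
    intervalIntegral.integral_const_mul] at hint
  simp only [sub_self, neg_zero, mul_zero, Real.exp_zero, one_mul] at hint
  unfold IL
  linear_combination α * hint

theorem DL_eq_Linv_deriv (a b α : ℝ) (hab : a < b) (hα : 0 < α)
    (v : ℝ → ℝ) (hv : ContDiff ℝ 1 v) (hper : v a = v b)
    (hper' : deriv v a = deriv v b) :
    (∀ x ∈ Set.Icc a b, DL α a b v x = (1 / α) * Linv α a b (deriv v) x) ∧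
    (∀ x ∈ Set.Icc a b, DL α a b (deriv v) x = deriv v x - α * DL α a b v x) := by
  have hα' : α ≠ 0 := ne_of_gt hα
  have hμ : 1 - Real.exp (-(α * (b - a))) ≠ 0 := by
    have : Real.exp (-(α * (b - a))) < 1 := by
      rw [Real.exp_lt_one_iff]
      nlinarith
    linarith
  have main : ∀ x, DL α a b v x = (1 / α) * Linv α a b (deriv v) x := by
    intro x
    have kx := IL_deriv_key α a x v hv
    have kb := IL_deriv_key α a b v hv
    unfold DL Linv
    rw [kx, kb, ← hper]
    field_simp
    ring
  refine ⟨fun x _ => main x, fun x _ => ?_⟩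
  have h1 := main x
  unfold DL at h1 ⊢
  have : α * (v x - Linv α a b v x) = Linv α a b (deriv v) x := by
    rw [h1]; field_simp
  linarith [this]
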